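/- arXiv:1411.7277 — 2 statements merged into one kernel-verified Lean document; each statement's English description precedes it below -/
import Mathlib

section
/- In a W-triangulation G satisfying the chord condition with respect to corners A, B, C, if C is not incident to any chord and deg(C) ≥ 3, then among the neighbours u_1, ..., u_q of C (in clockwise order starting at b_{s-1} and ending at c_2), the vertices u_2, ..., u_{q-1} are interior vertices of G. -/
open scoped Classical

/-! ## Orthogonal curves and 1-string B₂-VPG representations -/

/-- A point in the plane. -/
abbrev Pt := ℝ × ℝ

/-- Two points span an axis-parallel segment. -/
def axisAligned (p q : Pt) : Prop := p.1 = q.1 ∨ p.2 = q.2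

/-- An orthogonal curve, recorded by its corner points (endpoints and bends):
consecutive corner points are axis-aligned. -/
structure OrthoCurve where
  pts : List Pt
  len2 : 2 ≤ pts.length
  ortho : pts.Chain' axisAligned

namespace OrthoCurve

/-- Number of bends of an orthogonal curve. -/
def bends (c : OrthoCurve) : ℕ := c.pts.length - 2

/-- The set of points of the curve: the union of the segments between
consecutive corner points. -/
def toSet (c : OrthoCurve) : Set Pt :=
  ⋃ i : Fin (c.pts.length - 1),
    segment ℝ (c.pts.get ⟨i.1, by have := i.2; omega⟩)
              (c.pts.get ⟨i.1 + 1, by have := i.2; omega⟩)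

/-- The segment between the `i`-th pair of consecutive corners is vertical. -/
def IsVertSeg (p q : Pt) : Prop := p.1 = q.1 ∧ p.2 ≠ q.2

/-- The curve has at most one vertical segment (so it is shaped like C, Z,
or a horizontal mirror image thereof, possibly degenerate). -/
def AtMostOneVertical (c : OrthoCurve) : Prop :=
  ∀ i j : Fin (c.pts.length - 1),
    IsVertSeg (c.pts.get ⟨i.1, by have := i.2; omega⟩)
              (c.pts.get ⟨i.1 + 1, by have := i.2; omega⟩) →
    IsVertSeg (c.pts.get ⟨j.1, by have := j.2; omega⟩)
              (c.pts.get ⟨j.1 + 1, by have := j.2; omega⟩) →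
    i = j

end OrthoCurve

/-- A (partial) 1-string B₂-VPG representation of the edge set `E` of a graph `G`:
every vertex gets an orthogonal curve with at most two bends, two curves share at
most one point, and they meet iff the corresponding pair is an edge in `E`. -/
structure VPGRep {V : Type*} (G : SimpleGraph V) (E : Set (Sym2 V)) where
  curve : V → OrthoCurve
  bends_le : ∀ v, (curve v).bends ≤ 2
  one_string : ∀ u v, u ≠ v → ((curve u).toSet ∩ (curve v).toSet).Subsingleton
  cross_iff : ∀ u v, u ≠ v →
    (((curve u).toSet ∩ (curve v).toSet).Nonempty ↔ s(u, v) ∈ E)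

/-- `G` has a (full) 1-string B₂-VPG representation. -/
def HasB2VPG {V : Type*} (G : SimpleGraph V) : Prop := Nonempty (VPGRep G G.edgeSet)

/-! ## Combinatorial plane triangulated disks -/

/-- The cyclically next index in a list. -/
def nextIdx {α : Type*} (l : List α) (i : Fin l.length) : Fin l.length :=
  ⟨(i.1 + 1) % l.length, Nat.mod_lt _ (Nat.lt_of_le_of_lt (Nat.zero_le _) i.2)⟩

/-- A triangulated disk: a plane graph whose outer face is a simple cycle
(listed in counter-clockwise order) and all of whose interior faces are
triangles; every interior edge lies on exactly two interior faces and every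
outer edge on exactly one. -/
structure TriangulatedDisk (V : Type*) [DecidableEq V] where
  G : SimpleGraph V
  outer : List V
  outer_nodup : outer.Nodup
  outer_len : 3 ≤ outer.length
  outer_adj : ∀ i : Fin outer.length, G.Adj (outer.get i) (outer.get (nextIdx outer i))
  faces : Finset (Finset V)
  face_card : ∀ f ∈ faces, f.card = 3
  face_clique : ∀ f ∈ faces, G.IsClique (↑f : Set V)
  edge_face_count : ∀ u v, G.Adj u v →
    (faces.filter (fun f => u ∈ f ∧ v ∈ f)).card =
      (if ∃ i : Fin outer.length,
          (outer.get i = u ∧ outer.get (nextIdx outer i) = v) ∨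
          (outer.get i = v ∧ outer.get (nextIdx outer i) = u) then 1 else 2)

namespace TriangulatedDisk

variable {V : Type*} [DecidableEq V]

/-- `u` and `v` are consecutive on the outer cycle. -/
def OuterAdj (D : TriangulatedDisk V) (u v : V) : Prop :=
  ∃ i : Fin D.outer.length,
    (D.outer.get i = u ∧ D.outer.get (nextIdx D.outer i) = v) ∨
    (D.outer.get i = v ∧ D.outer.get (nextIdx D.outer i) = u)

/-- A chord: an interior edge with both endpoints on the outer face. -/
def IsChord (D : TriangulatedDisk V) (u v : V) : Prop :=
  D.G.Adj u v ∧ u ∈ D.outer ∧ v ∈ D.outer ∧ ¬ D.OuterAdj u v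

/-- The interior edges of a triangulated disk. -/
def interiorEdges (D : TriangulatedDisk V) : Set (Sym2 V) :=
  {e | e ∈ D.G.edgeSet ∧ ∀ u v, e = s(u, v) → ¬ D.OuterAdj u v}

/-- `v` lies strictly inside the triangle `t`: it is not on `t` nor on the outer
face, and every walk from `v` to the outer face must pass through `t`. -/
def InsideTri (D : TriangulatedDisk V) (t : Finset V) (v : V) : Prop :=
  v ∉ t ∧ v ∉ D.outer ∧ ∀ w ∈ D.outer, ∀ p : D.G.Walk v w, ∃ x ∈ t, x ∈ p.support

/-- A separating triangle: a triangle of `G` having a vertex strictly inside it. -/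
def SepTri (D : TriangulatedDisk V) (t : Finset V) : Prop :=
  t.card = 3 ∧ D.G.IsClique (↑t : Set V) ∧ ∃ v, D.InsideTri t v

end TriangulatedDisk

/-- A W-triangulation: a triangulated disk without separating triangles. -/
structure WTriangulation (V : Type*) [DecidableEq V] extends TriangulatedDisk V where
  no_sep : ∀ t : Finset V, ¬ toTriangulatedDisk.SepTri t

/-- The underlying triangulated disk of a W-triangulation. -/
def WTriangulation.disk {V : Type*} [DecidableEq V] (W : WTriangulation V) :
    TriangulatedDisk V := W.toTriangulatedDisk

/-- The counter-clockwise path from `a` to `b` (both inclusive) along a cyclic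
list `l`. -/
def cyclePath {V : Type*} [DecidableEq V] (l : List V) (a b : V) : List V :=
  let r := l.rotate (l.idxOf a)
  r.take (r.idxOf b + 1)

/-- A W-triangulation together with three distinct corners `A`, `B`, `C`
appearing in counter-clockwise order on the outer face. -/
structure CornerSetup (V : Type*) [DecidableEq V] extends WTriangulation V where
  A : V
  B : V
  C : V
  hA : A ∈ toTriangulatedDisk.outer
  hB : B ∈ toTriangulatedDisk.outer
  hC : C ∈ toTriangulatedDisk.outer
  hAB : A ≠ B
  hBC : B ≠ C
  hCA : C ≠ A
  ccw : (toTriangulatedDisk.outer.rotate (toTriangulatedDisk.outer.idxOf A)).idxOf B <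
        (toTriangulatedDisk.outer.rotate (toTriangulatedDisk.outer.idxOf A)).idxOf C

namespace CornerSetup

variable {V : Type*} [DecidableEq V]

/-- The underlying triangulated disk. -/
def disk (S : CornerSetup V) : TriangulatedDisk V := S.toTriangulatedDisk

/-- The CCW outer path from `A` to `B`. -/
def PAB (S : CornerSetup V) : List V := cyclePath S.disk.outer S.A S.B
/-- The CCW outer path from `B` to `C`. -/
def PBC (S : CornerSetup V) : List V := cyclePath S.disk.outer S.B S.C
/-- The CCW outer path from `C` to `A`. -/
def PCA (S : CornerSetup V) : List V := cyclePath S.disk.outer S.C S.A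

/-- The chord condition: no chord has both endpoints on a single one of the
three outer paths `P_AB`, `P_BC`, `P_CA`. -/
def ChordCond (S : CornerSetup V) : Prop :=
  ∀ u v, S.disk.IsChord u v →
    ¬(u ∈ S.PAB ∧ v ∈ S.PAB) ∧ ¬(u ∈ S.PBC ∧ v ∈ S.PBC) ∧ ¬(u ∈ S.PCA ∧ v ∈ S.PCA)

end CornerSetup

/-! ## General plane graphs (as combinatorial maps by facial cycles) -/

/-- An embedded planar graph all of whose facial boundaries are simple cycles,
recorded by the finite set of its facial cycles (including the outer one);
every edge lies on exactly two faces. -/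
structure PlaneGraph (V : Type*) [DecidableEq V] where
  G : SimpleGraph V
  faces : Finset (List V)
  outer : List V
  outer_mem : outer ∈ faces
  face_nodup : ∀ f ∈ faces, f.Nodup
  face_len : ∀ f ∈ faces, 3 ≤ f.length
  face_cycle : ∀ f ∈ faces, ∀ i : Fin f.length, G.Adj (f.get i) (f.get (nextIdx f i))
  edge_count : ∀ u v, G.Adj u v →
    (faces.filter (fun f => ∃ i : Fin f.length,
        (f.get i = u ∧ f.get (nextIdx f i) = v) ∨
        (f.get i = v ∧ f.get (nextIdx f i) = u))).card = 2

/-- No separating triangle: every triangle of the graph bounds a face. -/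
def PlaneGraph.NoSepTri {V : Type*} [DecidableEq V] (P : PlaneGraph V) : Prop :=
  ∀ t : Finset V, t.card = 3 → P.G.IsClique (↑t : Set V) →
    ∃ f ∈ P.faces, f.toFinset = t

/-- `k`-connectivity: more than `k` vertices, and removing fewer than `k`
vertices leaves the graph connected. -/
def KConnected {V : Type*} [Fintype V] (k : ℕ) (G : SimpleGraph V) : Prop :=
  k + 1 ≤ Fintype.card V ∧
    ∀ s : Finset V, s.card < k → (G.induce ((↑s : Set V)ᶜ)).Connected

private lemma mod_succ_inj {n i i' : ℕ} (hi : i < n) (hi' : i' < n)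
    (h : (i + 1) % n = (i' + 1) % n) : i = i' := by
  rcases Nat.lt_or_ge (i + 1) n with h1 | h1
  · rw [Nat.mod_eq_of_lt h1] at h
    rcases Nat.lt_or_ge (i' + 1) n with h2 | h2
    · rw [Nat.mod_eq_of_lt h2] at h; omega
    · have hn : i' + 1 = n := by omega
      rw [hn, Nat.mod_self] at h; omega
  · have hn : i + 1 = n := by omega
    rw [hn, Nat.mod_self] at h
    rcases Nat.lt_or_ge (i' + 1) n with h2 | h2
    · rw [Nat.mod_eq_of_lt h2] at h; omega
    · omega

/-- In a W-triangulation satisfying the chord condition, if the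
corner `C` is not incident to any chord and has degree at least 3, then all of
its neighbours other than its two outer-face neighbours are interior vertices. -/
theorem stmt3 {V : Type} [DecidableEq V] (S : CornerSetup V) (hcc : S.ChordCond)
    (hnochord : ∀ w, ¬ S.disk.IsChord S.C w)
    (hdeg : 3 ≤ (S.disk.G.neighborSet S.C).ncard)
    (u v : V) (hu : S.disk.OuterAdj S.C u) (hv : S.disk.OuterAdj S.C v) (huv : u ≠ v) :
    ∀ w, S.disk.G.Adj S.C w → w ≠ u → w ≠ v → w ∉ S.disk.outer := by
  intro w hadj hwu hwv hwout
  have hCout : S.C ∈ S.disk.outer := S.hC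
  have hw : S.disk.OuterAdj S.C w := by
    by_contra hno
    exact hnochord w ⟨hadj, hCout, hwout, hno⟩
  obtain ⟨j, hj⟩ := List.mem_iff_get.mp hCout
  have hnd := S.disk.outer_nodup
  have classify : ∀ x, S.disk.OuterAdj S.C x →
      x = S.disk.outer.get (nextIdx S.disk.outer j) ∨ ∃ i : Fin S.disk.outer.length, nextIdx S.disk.outer i = j ∧ S.disk.outer.get i = x := by
    rintro x ⟨i, ⟨h1, h2⟩ | ⟨h1, h2⟩⟩
    · left
      have hij : i = j := hnd.get_inj_iff.mp (h1.trans hj.symm)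
      rw [← hij]; exact h2.symm
    · exact Or.inr ⟨i, hnd.get_inj_iff.mp (h2.trans hj.symm), h1⟩
  have preduniq : ∀ i i' : Fin S.disk.outer.length, nextIdx S.disk.outer i = j → nextIdx S.disk.outer i' = j → i = i' := by
    intro i i' h h'
    have hm : (i.1 + 1) % S.disk.outer.length = (i'.1 + 1) % S.disk.outer.length :=
      congrArg Fin.val (h.trans h'.symm)
    exact Fin.ext (mod_succ_inj i.2 i'.2 hm)
  rcases classify u hu with hu1 | ⟨iu, hiu, hiu2⟩
  · rcases classify v hv with hv1 | ⟨iv, hiv, hiv2⟩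
    · exact huv (hu1.trans hv1.symm)
    · rcases classify w hw with hw1 | ⟨iw, hiw, hiw2⟩
      · exact hwu (hw1.trans hu1.symm)
      · have hE : iw = iv := preduniq _ _ hiw hiv
        exact hwv (hiw2.symm.trans (hE ▸ hiv2))
  · rcases classify w hw with hw1 | ⟨iw, hiw, hiw2⟩
    · rcases classify v hv with hv1 | ⟨iv, hiv, hiv2⟩
      · exact hwv (hw1.trans hv1.symm)
      · have hE : iv = iu := preduniq _ _ hiv hiu
        exact huv (hiu2.symm.trans (hE ▸ hiv2))
    · have hE : iw = iu := preduniq _ _ hiw hiu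
      exact hwu (hiw2.symm.trans (hE ▸ hiu2))
end

section
/- Let G be an n-vertex graph with a 1-string B_2-VPG representation. Then G has such a representation in which all bends and endpoints of curves lie on an integer grid of size O(n) × O(n); in particular, the total number of segments over all curves is at most 3n. -/
open scoped Classical

noncomputable def ramp (a b x : ℝ) : ℝ := max 0 (min 1 ((x - a) / (b - a)))

lemma ramp_mono {a b : ℝ} (hab : a < b) : Monotone (ramp a b) := by
  intro x y hxy
  unfold ramp
  have hd : (0:ℝ) < b - a := by linarith
  gcongr

lemma ramp_cont (a b : ℝ) : Continuous (ramp a b) := by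
  unfold ramp; fun_prop

lemma ramp_of_le {a b x : ℝ} (hab : a < b) (h : x ≤ a) : ramp a b x = 0 := by
  unfold ramp
  have hd : (0:ℝ) < b - a := by linarith
  have : (x - a) / (b - a) ≤ 0 := div_nonpos_of_nonpos_of_nonneg (by linarith) hd.le
  have h1 : min 1 ((x - a)/(b-a)) ≤ 0 := le_trans (min_le_right _ _) this
  exact max_eq_left h1

lemma ramp_of_ge {a b x : ℝ} (hab : a < b) (h : b ≤ x) : ramp a b x = 1 := by
  unfold ramp
  have hd : (0:ℝ) < b - a := by linarith
  have : (1:ℝ) ≤ (x - a) / (b - a) := (one_le_div hd).2 (by linarith)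
  rw [min_eq_left this]
  exact max_eq_right zero_le_one

lemma exists_phi (m : ℕ) (s : ℕ → ℝ) (hs : ∀ i j, i < j → j < m → s i < s j) :
    ∃ φ : ℝ → ℝ, StrictMono φ ∧ Continuous φ ∧ ∀ i, i < m → φ (s i) = i := by
  rcases Nat.eq_zero_or_pos m with hm | hm
  · exact ⟨id, strictMono_id, continuous_id, by omega⟩
  have hmono : ∀ i j, i ≤ j → j < m → s i ≤ s j := by
    intro i j hij hj
    rcases eq_or_lt_of_le hij with rfl | h
    · exact le_rfl
    · exact (hs i j h hj).le
  set φ : ℝ → ℝ := fun x =>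
    min 0 (x - s 0) + max 0 (x - s (m-1)) + ∑ i ∈ Finset.range (m-1), ramp (s i) (s (i+1)) x
    with hφ
  have hstep : ∀ i ∈ Finset.range (m-1), s i < s (i+1) := by
    intro i hi
    rw [Finset.mem_range] at hi
    exact hs i (i+1) (by omega) (by omega)
  refine ⟨φ, ?_, ?_, ?_⟩
  · -- strict mono
    intro x y hxy
    have h1 : min 0 (x - s 0) ≤ min 0 (y - s 0) := by gcongr
    have h2 : max 0 (x - s (m-1)) ≤ max 0 (y - s (m-1)) := by gcongr
    have h3 : ∀ i ∈ Finset.range (m-1), ramp (s i) (s (i+1)) x ≤ ramp (s i) (s (i+1)) y :=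
      fun i hi => ramp_mono (hstep i hi) hxy.le
    have hsum : ∑ i ∈ Finset.range (m-1), ramp (s i) (s (i+1)) x
        ≤ ∑ i ∈ Finset.range (m-1), ramp (s i) (s (i+1)) y := Finset.sum_le_sum h3
    by_cases hx0 : x < s 0
    · have hstrict : min 0 (x - s 0) < min 0 (y - s 0) := by
        have : min 0 (x - s 0) = x - s 0 := min_eq_right (by linarith)
        rw [this]
        exact lt_min (by linarith) (by linarith)
      simp only [hφ]
      exact add_lt_add_of_lt_of_le (add_lt_add_of_lt_of_le hstrict h2) hsum
    push_neg at hx0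
    by_cases hxh : s (m-1) ≤ x
    · have hstrict : max 0 (x - s (m-1)) < max 0 (y - s (m-1)) := by
        have hy : max 0 (y - s (m-1)) = y - s (m-1) := max_eq_right (by linarith)
        have hx : max 0 (x - s (m-1)) = x - s (m-1) := max_eq_right (by linarith)
        rw [hx, hy]; linarith
      simp only [hφ]
      exact add_lt_add_of_lt_of_le (add_lt_add_of_le_of_lt h1 hstrict) hsum
    push_neg at hxh
    -- find i with s i ≤ x < s (i+1)
    have hm2 : 2 ≤ m := by
      by_contra h
      have : m = 1 := by omega
      rw [this] at hxh
      simp at hxh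
      linarith
    have hex : ∃ k, x < s (k+1) := ⟨m-2, by
      have : m - 2 + 1 = m - 1 := by omega
      rw [this]; exact hxh⟩
    classical
    let i := Nat.find hex
    have hi1 : x < s (i+1) := Nat.find_spec hex
    have hile : i ≤ m - 2 := Nat.find_le (by
      have : m - 2 + 1 = m - 1 := by omega
      rw [this]; exact hxh)
    have hsi : s i ≤ x := by
      rcases Nat.eq_zero_or_pos i with h0 | h0
      · rw [h0]; exact hx0
      · have := Nat.find_min hex (m := i - 1) (by omega)
        push_neg at this
        have hii : i - 1 + 1 = i := by omega
        rwa [hii] at this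
    have himem : i ∈ Finset.range (m-1) := Finset.mem_range.2 (by omega)
    have hd : (0:ℝ) < s (i+1) - s i := by
      have := hs i (i+1) (by omega) (by omega)
      linarith
    have hstrict : ramp (s i) (s (i+1)) x < ramp (s i) (s (i+1)) y := by
      unfold ramp
      have hrx : (x - s i) / (s (i+1) - s i) < 1 := (div_lt_one hd).2 (by linarith)
      have hrx0 : 0 ≤ (x - s i) / (s (i+1) - s i) := div_nonneg (by linarith) hd.le
      have hx' : max 0 (min 1 ((x - s i) / (s (i+1) - s i))) = (x - s i) / (s (i+1) - s i) := by
        rw [min_eq_right hrx.le]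
        exact max_eq_right hrx0
      rw [hx']
      have hry : (x - s i) / (s (i+1) - s i) < (y - s i) / (s (i+1) - s i) := by
        gcongr
      calc (x - s i) / (s (i+1) - s i) < min 1 ((y - s i) / (s (i+1) - s i)) := lt_min hrx hry
        _ ≤ max 0 (min 1 ((y - s i) / (s (i+1) - s i))) := le_max_right _ _
    have hsumlt : ∑ j ∈ Finset.range (m-1), ramp (s j) (s (j+1)) x
        < ∑ j ∈ Finset.range (m-1), ramp (s j) (s (j+1)) y :=
      Finset.sum_lt_sum h3 ⟨i, himem, hstrict⟩
    simp only [hφ]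
    exact add_lt_add_of_le_of_lt (add_le_add h1 h2) hsumlt
  · -- continuous
    apply Continuous.add
    apply Continuous.add
    · fun_prop
    · fun_prop
    · exact continuous_finset_sum _ (fun i _ => ramp_cont _ _)
  · intro j hj
    simp only [hφ]
    have t1 : min 0 (s j - s 0) = 0 := min_eq_left (by
      have := hmono 0 j (Nat.zero_le _) hj; linarith)
    have t2 : max 0 (s j - s (m-1)) = 0 := max_eq_left (by
      have := hmono j (m-1) (by omega) (by omega); linarith)
    rw [t1, t2, zero_add, zero_add]
    have hterm : ∀ i ∈ Finset.range (m-1), ramp (s i) (s (i+1)) (s j)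
        = if i < j then 1 else 0 := by
      intro i hi
      rw [Finset.mem_range] at hi
      by_cases h : i < j
      · rw [if_pos h]
        exact ramp_of_ge (hs i (i+1) (by omega) (by omega)) (hmono (i+1) j (by omega) hj)
      · rw [if_neg h]
        exact ramp_of_le (hs i (i+1) (by omega) (by omega)) (hmono j i (by omega) (by omega))
    rw [Finset.sum_congr rfl hterm, Finset.sum_boole]
    have : Finset.filter (fun i => i < j) (Finset.range (m-1)) = Finset.range j := by
      ext k
      simp only [Finset.mem_filter, Finset.mem_range]
      omega
    rw [this, Finset.card_range]



lemma image_segment_real (φ : ℝ → ℝ) (hm : StrictMono φ) (hc : Continuous φ) (a b : ℝ) :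
    φ '' segment ℝ a b = segment ℝ (φ a) (φ b) := by
  rw [segment_eq_uIcc, segment_eq_uIcc]
  have key : ∀ a b : ℝ, a ≤ b → φ '' Set.Icc a b = Set.Icc (φ a) (φ b) := by
    intro a b hab
    apply Set.Subset.antisymm
    · rintro _ ⟨t, ht, rfl⟩
      exact ⟨hm.monotone ht.1, hm.monotone ht.2⟩
    · exact intermediate_value_Icc hab hc.continuousOn
  rcases le_total a b with h | h
  · rw [Set.uIcc_of_le h, Set.uIcc_of_le (hm.monotone h), key a b h]
  · rw [Set.uIcc_of_ge h, Set.uIcc_of_ge (hm.monotone h), key b a h]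

lemma seg_horiz (p q : Pt) (h : p.2 = q.2) :
    segment ℝ p q = (fun x => ((x, p.2) : Pt)) '' segment ℝ p.1 q.1 := by
  rw [segment_eq_image ℝ p q, segment_eq_image ℝ p.1 q.1, Set.image_image]
  apply Set.image_congr
  intro θ _
  simp only [Prod.ext_iff, Prod.smul_fst, Prod.smul_snd, Prod.fst_add, Prod.snd_add,
    smul_eq_mul]
  refine ⟨trivial, ?_⟩
  rw [h]; ring

lemma seg_vert (p q : Pt) (h : p.1 = q.1) :
    segment ℝ p q = (fun y => ((p.1, y) : Pt)) '' segment ℝ p.2 q.2 := by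
  rw [segment_eq_image ℝ p q, segment_eq_image ℝ p.2 q.2, Set.image_image]
  apply Set.image_congr
  intro θ _
  simp only [Prod.ext_iff, Prod.smul_fst, Prod.smul_snd, Prod.fst_add, Prod.snd_add,
    smul_eq_mul]
  refine ⟨?_, trivial⟩
  rw [h]; ring

lemma image_seg (φ : ℝ → ℝ) (hm : StrictMono φ) (hc : Continuous φ) (p q : Pt)
    (h : axisAligned p q) :
    (Prod.map φ φ) '' segment ℝ p q = segment ℝ (Prod.map φ φ p) (Prod.map φ φ q) := by
  rcases h with h | h
  · rw [seg_vert p q h, seg_vert (Prod.map φ φ p) (Prod.map φ φ q) (by simp [h])]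
    simp only [Prod.map_fst, Prod.map_snd]
    rw [← image_segment_real φ hm hc p.2 q.2, Set.image_image, Set.image_image]
    rfl
  · rw [seg_horiz p q h, seg_horiz (Prod.map φ φ p) (Prod.map φ φ q) (by simp [h])]
    simp only [Prod.map_fst, Prod.map_snd]
    rw [← image_segment_real φ hm hc p.1 q.1, Set.image_image, Set.image_image]
    rfl

lemma OrthoCurve.toSet_eq (c : OrthoCurve) :
    c.toSet = ⋃ i ∈ Finset.range (c.pts.length - 1),
      segment ℝ (c.pts.getD i (0,0)) (c.pts.getD (i+1) (0,0)) := by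
  have h2 := c.len2
  ext x
  simp only [OrthoCurve.toSet, Set.mem_iUnion, Finset.mem_range]
  constructor
  · rintro ⟨i, hx⟩
    have hi := i.2
    refine ⟨i.1, hi, ?_⟩
    rw [List.getD_eq_getElem _ _ (by omega : i.1 < c.pts.length), List.getD_eq_getElem _ _ (by omega : i.1+1 < c.pts.length)]
    exact hx
  · rintro ⟨i, hi, hx⟩
    refine ⟨⟨i, hi⟩, ?_⟩
    rw [List.getD_eq_getElem _ _ (by omega : i < c.pts.length), List.getD_eq_getElem _ _ (by omega : i+1 < c.pts.length)] at hx
    exact hx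

/-- There is a universal constant `c` such that every `n`-vertex
graph with a 1-string B₂-VPG representation has one in which all corner points
(endpoints and bends) of all curves are integer points of a grid of size
`c·n × c·n`, and the total number of segments over all curves is at most `3n`. -/
theorem stmt9 :
    ∃ c : ℕ, 0 < c ∧
      ∀ (V : Type) [Fintype V] (G : SimpleGraph V), HasB2VPG G →
        ∃ R : VPGRep G G.edgeSet,
          (∀ v, ∀ p ∈ (R.curve v).pts,
            (∃ a : ℤ, p.1 = a ∧ 0 ≤ a ∧ a ≤ (c * Fintype.card V : ℕ)) ∧
            (∃ b : ℤ, p.2 = b ∧ 0 ≤ b ∧ b ≤ (c * Fintype.card V : ℕ))) ∧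
          (∑ v, ((R.curve v).pts.length - 1)) ≤ 3 * Fintype.card V := by
  refine ⟨8, by norm_num, ?_⟩
  intro V _ G hG
  obtain ⟨R⟩ := hG
  classical
  set n := Fintype.card V with hn
  have hlen4 : ∀ v, (R.curve v).pts.length ≤ 4 := by
    intro v
    have h1 := R.bends_le v
    have h2 := (R.curve v).len2
    unfold OrthoCurve.bends at h1
    omega
  set S : Finset ℝ := Finset.univ.biUnion
    (fun v : V => ((R.curve v).pts.map Prod.fst ++ (R.curve v).pts.map Prod.snd).toFinset)
    with hS
  have hScard : S.card ≤ 8 * n := by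
    calc S.card ≤ ∑ v : V, ((R.curve v).pts.map Prod.fst ++ (R.curve v).pts.map Prod.snd).toFinset.card :=
          Finset.card_biUnion_le
      _ ≤ ∑ _v : V, 8 := by
          apply Finset.sum_le_sum
          intro v _
          calc ((R.curve v).pts.map Prod.fst ++ (R.curve v).pts.map Prod.snd).toFinset.card
              ≤ ((R.curve v).pts.map Prod.fst ++ (R.curve v).pts.map Prod.snd).length :=
                List.toFinset_card_le _
            _ ≤ 8 := by
                rw [List.length_append, List.length_map, List.length_map]
                have := hlen4 v; omega
      _ = 8 * n := by rw [Finset.sum_const, Finset.card_univ, smul_eq_mul, mul_comm]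
  set L : List ℝ := S.sort (· ≤ ·) with hL
  have hLlen : L.length = S.card := Finset.length_sort _
  set s : ℕ → ℝ := fun i => L.getD i 0 with hsdef
  have hs : ∀ i j, i < j → j < L.length → s i < s j := by
    intro i j hij hj
    have hsorted : List.Pairwise (· < ·) L := (Finset.sortedLT_sort S).pairwise
    have := List.pairwise_iff_getElem.1 hsorted i j (by omega) hj hij
    simp only [hsdef]
    rwa [List.getD_eq_getElem _ _ (by omega : i < L.length), List.getD_eq_getElem _ _ hj]
  obtain ⟨φ, hφm, hφc, hφv⟩ := exists_phi L.length s hs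
  set f : Pt → Pt := Prod.map φ φ with hf
  have hfinj : Function.Injective f := hφm.injective.prodMap hφm.injective
  -- the transformed curves
  have hchain : ∀ v, ((R.curve v).pts.map f).Chain' axisAligned := by
    intro v
    rw [List.Chain', List.isChain_map]
    refine ((R.curve v).ortho).imp ?_
    intro a b hab
    rcases hab with h | h
    · exact Or.inl (congrArg φ h)
    · exact Or.inr (congrArg φ h)
  set C : V → OrthoCurve := fun v =>
    ⟨(R.curve v).pts.map f, by rw [List.length_map]; exact (R.curve v).len2, hchain v⟩
    with hC
  have hCtoSet : ∀ v, (C v).toSet = f '' (R.curve v).toSet := by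
    intro v
    rw [OrthoCurve.toSet_eq, OrthoCurve.toSet_eq, Set.image_iUnion₂]
    have hlen2 := (R.curve v).len2
    have hClen : (C v).pts.length = (R.curve v).pts.length := List.length_map _
    rw [hClen]
    apply Set.iUnion₂_congr
    intro i hi
    rw [Finset.mem_range] at hi
    have hi1 : i < (R.curve v).pts.length := by omega
    have hi2 : i + 1 < (R.curve v).pts.length := by omega
    have hg1 : (C v).pts.getD i (0,0) = f ((R.curve v).pts.getD i (0,0)) := by
      rw [List.getD_eq_getElem _ _ (by rw [hClen]; omega : i < (C v).pts.length), List.getD_eq_getElem _ _ hi1]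
      exact List.getElem_map f
    have hg2 : (C v).pts.getD (i+1) (0,0) = f ((R.curve v).pts.getD (i+1) (0,0)) := by
      rw [List.getD_eq_getElem _ _ (by rw [hClen]; omega : i + 1 < (C v).pts.length), List.getD_eq_getElem _ _ hi2]
      exact List.getElem_map f
    rw [hg1, hg2]
    have haa : axisAligned ((R.curve v).pts.getD i (0,0)) ((R.curve v).pts.getD (i+1) (0,0)) := by
      have := List.isChain_iff_getElem.1 (R.curve v).ortho i (by omega)
      rwa [List.getD_eq_getElem _ _ hi1, List.getD_eq_getElem _ _ hi2]
    exact (image_seg φ hφm hφc _ _ haa).symm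
  refine ⟨⟨C, ?_, ?_, ?_⟩, ?_, ?_⟩
  · intro v
    have := R.bends_le v
    unfold OrthoCurve.bends at *
    simpa [hC, List.length_map] using this
  · intro u v huv
    rw [hCtoSet, hCtoSet, ← Set.image_inter hfinj]
    exact (R.one_string u v huv).image f
  · intro u v huv
    rw [hCtoSet, hCtoSet, ← Set.image_inter hfinj, Set.image_nonempty]
    exact R.cross_iff u v huv
  · -- grid bounds
    intro v p hp
    simp only [hC] at hp
    obtain ⟨q, hq, rfl⟩ := List.mem_map.1 hp
    have hmem : ∀ x : ℝ, x ∈ S → ∃ k : ℕ, φ x = k ∧ k ≤ 8 * n := by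
      intro x hx
      have hxL : x ∈ L := (Finset.mem_sort _).2 hx
      obtain ⟨⟨i, hi⟩, hgi⟩ := List.mem_iff_get.1 hxL
      refine ⟨i, ?_, by omega⟩
      have : s i = x := by
        simp only [hsdef]; rw [List.getD_eq_getElem _ _ hi]; exact hgi
      rw [← this, hφv i hi]
    have hq1 : q.1 ∈ S := by
      rw [hS]
      apply Finset.mem_biUnion.2
      exact ⟨v, Finset.mem_univ v, List.mem_toFinset.2 (List.mem_append_left _
        (List.mem_map.2 ⟨q, hq, rfl⟩))⟩
    have hq2 : q.2 ∈ S := by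
      rw [hS]
      apply Finset.mem_biUnion.2
      exact ⟨v, Finset.mem_univ v, List.mem_toFinset.2 (List.mem_append_right _
        (List.mem_map.2 ⟨q, hq, rfl⟩))⟩
    obtain ⟨k1, hk1, hk1le⟩ := hmem q.1 hq1
    obtain ⟨k2, hk2, hk2le⟩ := hmem q.2 hq2
    constructor
    · exact ⟨(k1 : ℤ), by simpa [hf] using hk1, by positivity, by exact_mod_cast hk1le⟩
    · exact ⟨(k2 : ℤ), by simpa [hf] using hk2, by positivity, by exact_mod_cast hk2le⟩
  · -- segment count
    calc ∑ v : V, ((C v).pts.length - 1) = ∑ v : V, ((R.curve v).pts.length - 1) := by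
          apply Finset.sum_congr rfl
          intro v _
          simp [hC, List.length_map]
      _ ≤ ∑ _v : V, 3 := by
          apply Finset.sum_le_sum
          intro v _
          have := hlen4 v; omega
      _ = 3 * n := by rw [Finset.sum_const, Finset.card_univ, smul_eq_mul, mul_comm]
end
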